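/- arXiv:1103.1729 — 3 statements merged into one kernel-verified Lean document; each statement's English description precedes it below -/
import Mathlib

section
/- Let (Y,Z) be jointly normal with correlation ρ < 0, R = e^Y - 1, X = e^Z. If E[R] > 0, then E[R · 1_{X ≤ c}] > 0 for all c > 0 (equivalently E[R | X ≤ c] > 0). -/
open MeasureTheory ProbabilityTheory

/-- `e^(b+sx)` is integrable w.r.t. the standard Gaussian. -/
lemma integrable_exp_affine_gaussian (b s : ℝ) :
    Integrable (fun x => Real.exp (b + s * x)) (gaussianReal 0 1) := by
  have h1 : (1 : NNReal) ≠ 0 := one_ne_zero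
  rw [gaussianReal_of_var_ne_zero _ h1, gaussianPDF_def,
    integrable_withDensity_iff ((measurable_gaussianPDFReal 0 1).ennreal_ofReal) (Filter.Eventually.of_forall fun x => ENNReal.ofReal_lt_top)]
  have key : ∀ x : ℝ, Real.exp (b + s * x) * (ENNReal.ofReal (gaussianPDFReal 0 1 x)).toReal
      = Real.exp (b + s ^ 2 / 2) * gaussianPDFReal s 1 x := by
    intro x
    rw [ENNReal.toReal_ofReal (gaussianPDFReal_nonneg 0 1 x)]
    simp only [gaussianPDFReal]
    rw [mul_left_comm, mul_left_comm (Real.exp (b + s ^ 2 / 2))]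
    congr 1
    rw [← Real.exp_add, ← Real.exp_add]
    congr 1
    push_cast
    ring
  simp only [key]
  exact (integrable_gaussianPDFReal s 1).const_mul _

lemma integrable_f_gaussian (b s : ℝ) :
    Integrable (fun x => Real.exp (b + s * x) - 1) (gaussianReal 0 1) :=
  (integrable_exp_affine_gaussian b s).sub (integrable_const 1)

/-- positivity of the truncated expectation on half-lines. -/
lemma tail_pos (b s : ℝ) (hs : 0 < s)
    (hpos : 0 < ∫ x, (Real.exp (b + s * x) - 1) ∂(gaussianReal 0 1)) (a : ℝ) :
    0 < ∫ x in Set.Ici a, (Real.exp (b + s * x) - 1) ∂(gaussianReal 0 1) := by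
  set G := gaussianReal 0 1 with hG
  set f : ℝ → ℝ := fun x => Real.exp (b + s * x) - 1 with hf
  have hfi : Integrable f G := integrable_f_gaussian b s
  rcases le_or_gt (b + s * a) 0 with hcase | hcase
  · -- below the sign-change point: ∫_{Ici a} f = ∫ f - ∫_{Iio a} f ≥ ∫ f > 0
    have hsplit := integral_add_compl (measurableSet_Iio (a := a)) hfi (μ := G)
    have hIio : ∫ x in Set.Iio a, f x ∂G ≤ 0 := by
      refine setIntegral_nonpos measurableSet_Iio (fun x hx => ?_)
      have : b + s * x ≤ 0 := by nlinarith [Set.mem_Iio.mp hx]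
      simp only [hf, sub_nonpos]
      calc Real.exp (b + s * x) ≤ Real.exp 0 := Real.exp_le_exp.mpr this
        _ = 1 := Real.exp_zero
    have hcompl : (Set.Iio a)ᶜ = Set.Ici a := by ext x; simp
    rw [hcompl] at hsplit
    linarith
  · -- above: the integrand is ≥ f a > 0 on Ici a
    have hfa : 0 < f a := by
      simp only [hf, sub_pos]
      calc (1:ℝ) = Real.exp 0 := Real.exp_zero.symm
        _ < Real.exp (b + s * a) := Real.exp_lt_exp.mpr hcase
    have hGIci : 0 < (G (Set.Ici a)).toReal := by
      refine ENNReal.toReal_pos ?_ (measure_ne_top _ _)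
      intro h0
      have := gaussianReal_absolutelyContinuous' 0 one_ne_zero h0
      simp [Real.volume_Ici] at this
    have hge : f a * (G (Set.Ici a)).toReal ≤ ∫ x in Set.Ici a, f x ∂G := by
      rw [mul_comm, ← smul_eq_mul, ← measureReal_def]
      refine setIntegral_ge_of_const_le measurableSet_Ici (measure_ne_top _ _)
        (fun x hx => ?_) hfi.integrableOn
      have : b + s * a ≤ b + s * x := by nlinarith [Set.mem_Ici.mp hx]
      simp only [hf, sub_le_sub_iff_right]
      exact Real.exp_le_exp.mpr this
    exact lt_of_lt_of_le (mul_pos hfa hGIci) hge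

/-- `(Y,Z)` is bivariate normal with means `μY, μZ`, standard deviations `σY, σZ` and
correlation `ρ < 0`, realized via independent standard normals `W₁, W₂`. If
`R = e^Y - 1` has positive mean, then `E[R · 1_{X ≤ c}] > 0` for all `c > 0`,
where `X = e^Z`. -/
theorem stmt9 {Ω : Type*} [MeasurableSpace Ω] (μ : Measure Ω) [IsProbabilityMeasure μ]
    (W₁ W₂ : Ω → ℝ) (hW₁ : Measurable W₁) (hW₂ : Measurable W₂)
    (hlaw1 : μ.map W₁ = gaussianReal 0 1) (hlaw2 : μ.map W₂ = gaussianReal 0 1)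
    (hindep : IndepFun W₁ W₂ μ)
    (μY μZ σY σZ ρ : ℝ) (hσY : 0 < σY) (hσZ : 0 < σZ) (hρ₁ : -1 < ρ) (hρ₂ : ρ < 0)
    (Y Z : Ω → ℝ)
    (hY : Y = fun ω => μY + σY * W₁ ω)
    (hZ : Z = fun ω => μZ + σZ * (ρ * W₁ ω + Real.sqrt (1 - ρ ^ 2) * W₂ ω))
    (hER : 0 < ∫ ω, (Real.exp (Y ω) - 1) ∂μ) :
    ∀ c : ℝ, 0 < c → 0 < ∫ ω in {ω | Real.exp (Z ω) ≤ c}, (Real.exp (Y ω) - 1) ∂μ := by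
  intro c hc
  set G := gaussianReal 0 1 with hG
  set s : ℝ := Real.sqrt (1 - ρ ^ 2) with hs
  set f : ℝ → ℝ := fun x => Real.exp (μY + σY * x) - 1 with hfdef
  set t : ℝ := Real.log c with ht
  -- the mean of f under G is positive
  have hEf : 0 < ∫ x, f x ∂G := by
    have : ∫ x, f x ∂G = ∫ ω, (Real.exp (Y ω) - 1) ∂μ := by
      rw [← hlaw1, integral_map hW₁.aemeasurable]
      · simp [hfdef, hY]
      · exact ((Real.measurable_exp.comp ((measurable_const.add
          (measurable_const.mul measurable_id)))).sub measurable_const).aestronglyMeasurable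
    rwa [this]
  have hfi : Integrable f G := integrable_f_gaussian μY σY
  -- the product set and function
  set T : Set (ℝ × ℝ) := {q : ℝ × ℝ | μZ + σZ * (ρ * q.1 + s * q.2) ≤ t} with hT
  have hTmeas : MeasurableSet T := by
    apply measurableSet_le (by fun_prop) measurable_const
  set F : ℝ × ℝ → ℝ := T.indicator (fun q => f q.1) with hF
  have hFmeas : Measurable F := ((Real.measurable_exp.comp (measurable_const.add
      (measurable_const.mul measurable_fst))).sub measurable_const).indicator hTmeas
  -- joint law
  have hmap : μ.map (fun ω => (W₁ ω, W₂ ω)) = G.prod G := by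
    rw [(indepFun_iff_map_prod_eq_prod_map_map hW₁.aemeasurable hW₂.aemeasurable).mp hindep,
      hlaw1, hlaw2]
  -- rewrite the set integral
  have hset : {ω | Real.exp (Z ω) ≤ c} = {ω | Z ω ≤ t} := by
    ext ω; simp [ht, Real.le_log_iff_exp_le hc]
  have hZmeas : Measurable Z := by
    rw [hZ]; fun_prop
  have step1 : ∫ ω in {ω | Real.exp (Z ω) ≤ c}, (Real.exp (Y ω) - 1) ∂μ
      = ∫ ω, F (W₁ ω, W₂ ω) ∂μ := by
    rw [hset, ← integral_indicator (measurableSet_le hZmeas measurable_const)]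
    congr 1
    funext ω
    have hmem : (Z ω ≤ t) ↔ ((W₁ ω, W₂ ω) ∈ T) := by simp [hT, hZ]
    by_cases h : Z ω ≤ t
    · have h1 : ω ∈ {a | Z a ≤ t} := h
      rw [Set.indicator_of_mem h1, hF, Set.indicator_of_mem (hmem.mp h)]
      simp [hfdef, hY]
    · have h1 : ω ∉ {a | Z a ≤ t} := h
      rw [Set.indicator_of_notMem h1, hF,
        Set.indicator_of_notMem (fun hm => h (hmem.mpr hm))]
  have step2 : ∫ ω, F (W₁ ω, W₂ ω) ∂μ = ∫ p, F p ∂(G.prod G) := by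
    rw [← hmap, integral_map (hW₁.prodMk hW₂).aemeasurable hFmeas.aestronglyMeasurable]
  -- integrability of F on the product
  have hbase : Integrable (fun p : ℝ × ℝ => f p.1) (G.prod G) := by
    have hm : (G.prod G).map Prod.fst = G := by
      rw [Measure.map_fst_prod]; simp
    have h1 : Integrable f ((G.prod G).map Prod.fst) := by rwa [hm]
    have := (integrable_map_measure (by rw [hm]; exact hfi.aestronglyMeasurable : AEStronglyMeasurable f
      ((G.prod G).map Prod.fst)) measurable_fst.aemeasurable).mp h1
    exact this
  have hFint : Integrable F (G.prod G) := by
    refine Integrable.mono hbase hFmeas.aestronglyMeasurable ?_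
    refine Filter.Eventually.of_forall fun p => ?_
    exact norm_indicator_le_norm_self _ p
  rw [step1, step2, integral_prod_symm F hFint]
  -- inner integral: indicator reduces to a half-line integral
  have hinner : ∀ y : ℝ, ∫ x, F (x, y) ∂G
      = ∫ x in Set.Ici (((t - μZ) / σZ - s * y) / ρ), f x ∂G := by
    intro y
    set a : ℝ := ((t - μZ) / σZ - s * y) / ρ with ha
    have hseteq : {x : ℝ | (x, y) ∈ T} = Set.Ici a := by
      ext x
      simp only [hT, Set.mem_setOf_eq, Set.mem_Ici, ha]
      rw [div_le_iff_of_neg hρ₂]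
      constructor
      · intro h
        have h2 : ρ * x + s * y ≤ (t - μZ) / σZ := by
          rw [le_div_iff₀ hσZ]; nlinarith
        linarith
      · intro h
        have h2 : σZ * (ρ * x + s * y) ≤ σZ * ((t - μZ) / σZ) := by
          apply mul_le_mul_of_nonneg_left _ hσZ.le
          linarith
        rw [mul_div_cancel₀ _ hσZ.ne'] at h2
        linarith
    have : (fun x => F (x, y)) = (Set.Ici a).indicator f := by
      funext x
      by_cases h : (x, y) ∈ T
      · rw [hF, Set.indicator_of_mem h,
          Set.indicator_of_mem (hseteq ▸ (Set.mem_setOf_eq ▸ h : x ∈ {x : ℝ | (x, y) ∈ T}))]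
      · rw [hF, Set.indicator_of_notMem h, Set.indicator_of_notMem
          (fun hm => h (by have : x ∈ {x : ℝ | (x, y) ∈ T} := hseteq ▸ hm; exact this))]
    rw [this, integral_indicator measurableSet_Ici]
  -- outer integral positivity
  have hpos : ∀ y : ℝ, 0 < ∫ x, F (x, y) ∂G := by
    intro y
    rw [hinner y]
    exact tail_pos μY σY hσY hEf _
  have houter : Integrable (fun y => ∫ x, F (x, y) ∂G) G := hFint.integral_prod_right
  rw [integral_pos_iff_support_of_nonneg_ae
    (Filter.Eventually.of_forall fun y => (hpos y).le) houter]
  have : Function.support (fun y => ∫ x, F (x, y) ∂G) = Set.univ := by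
    ext y; simp [Function.mem_support, (hpos y).ne']
  rw [this]
  simp
end

section
/- Let ρ be a convex, cash-invariant risk measure and V_R(v,w) = -w + ρ(-vR + X). Then the function v_ρ(w) = sup{v ∈ [0,w] : V_R(v,w) ≤ 0} is concave on its effective domain 𝒟 = {w > 0 : v_ρ(w) > -∞}, and hence continuous on the interior of 𝒟. -/
private lemma mul_csSup_le {s : Set ℝ} (hne : s.Nonempty) (hbdd : BddAbove s)
    {c k : ℝ} (hc : 0 ≤ c) (h : ∀ v ∈ s, c * v ≤ k) : c * sSup s ≤ k := by
  rcases eq_or_lt_of_le hc with rfl | hc'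
  · obtain ⟨v, hv⟩ := hne
    simpa using h v hv
  · rw [mul_comm, ← le_div_iff₀ hc']
    refine csSup_le hne fun v hv => ?_
    rw [le_div_iff₀ hc']
    simpa [mul_comm] using h v hv

theorem stmt13 {Ω : Type*} (ρ : (Ω → ℝ) → ℝ)
    (hcash : ∀ (L : Ω → ℝ) (c : ℝ), ρ (fun ω => L ω + c) = ρ L + c)
    (hconv : ∀ (L L' : Ω → ℝ) (t : ℝ), t ∈ Set.Icc (0:ℝ) 1 →
      ρ (fun ω => t * L ω + (1 - t) * L' ω) ≤ t * ρ L + (1 - t) * ρ L')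
    (X R : Ω → ℝ)
    (vρ : ℝ → ℝ)
    (hvρ : vρ = fun w =>
      sSup {v : ℝ | 0 ≤ v ∧ v ≤ w ∧ -w + ρ (fun ω => -(v * R ω) + X ω) ≤ 0})
    (D : Set ℝ)
    (hD : D = {w : ℝ | 0 < w ∧
      {v : ℝ | 0 ≤ v ∧ v ≤ w ∧ -w + ρ (fun ω => -(v * R ω) + X ω) ≤ 0}.Nonempty}) :
    ConcaveOn ℝ D vρ ∧ ContinuousOn vρ (interior D) := by
  set S : ℝ → Set ℝ := fun w =>
    {v : ℝ | 0 ≤ v ∧ v ≤ w ∧ -w + ρ (fun ω => -(v * R ω) + X ω) ≤ 0} with hS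
  -- key combination lemma
  have key : ∀ (x y a b : ℝ), 0 ≤ a → 0 ≤ b → a + b = 1 →
      ∀ v₁ ∈ S x, ∀ v₂ ∈ S y, a * v₁ + b * v₂ ∈ S (a * x + b * y) := by
    intro x y a b ha hb hab v₁ hv₁ v₂ hv₂
    obtain ⟨hv₁0, hv₁x, hρ₁⟩ := hv₁
    obtain ⟨hv₂0, hv₂y, hρ₂⟩ := hv₂
    have hb' : b = 1 - a := by linarith
    subst hb'
    refine ⟨by positivity, by nlinarith, ?_⟩
    have := hconv (fun ω => -(v₁ * R ω) + X ω) (fun ω => -(v₂ * R ω) + X ω) a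
      ⟨ha, by linarith⟩
    have heq : (fun ω => a * (-(v₁ * R ω) + X ω) + (1 - a) * (-(v₂ * R ω) + X ω))
        = fun ω => -((a * v₁ + (1 - a) * v₂) * R ω) + X ω := by
      funext ω; ring
    rw [heq] at this
    nlinarith
  have hbdd : ∀ w : ℝ, BddAbove (S w) := fun w => ⟨w, fun v hv => hv.2.1⟩
  have hconc : ConcaveOn ℝ D vρ := by
    constructor
    · intro x hx y hy a b ha hb hab
      rw [hD] at hx hy ⊢
      obtain ⟨hx0, v₁, hv₁⟩ := hx
      obtain ⟨hy0, v₂, hv₂⟩ := hy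
      refine ⟨?_, ⟨a * v₁ + b * v₂, ?_⟩⟩
      · simp only [smul_eq_mul]
        rcases lt_or_eq_of_le ha with h | h
        · nlinarith
        · nlinarith
      · simp only [smul_eq_mul]
        exact key x y a b ha hb hab v₁ hv₁ v₂ hv₂
    · intro x hx y hy a b ha hb hab
      rw [hD] at hx hy
      obtain ⟨hx0, hSx⟩ := hx
      obtain ⟨hy0, hSy⟩ := hy
      simp only [smul_eq_mul, hvρ]
      have hle : ∀ v₁ ∈ S x, a * v₁ + b * sSup (S y) ≤ sSup (S (a * x + b * y)) := by
        intro v₁ hv₁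
        have : b * sSup (S y) ≤ sSup (S (a * x + b * y)) - a * v₁ := by
          refine mul_csSup_le hSy (hbdd y) hb fun v₂ hv₂ => ?_
          have := le_csSup (hbdd _) (key x y a b ha hb hab v₁ hv₁ v₂ hv₂)
          linarith
        linarith
      have : a * sSup (S x) ≤ sSup (S (a * x + b * y)) - b * sSup (S y) := by
        refine mul_csSup_le hSx (hbdd x) ha fun v₁ hv₁ => ?_
        have := hle v₁ hv₁; linarith
      linarith
  exact ⟨hconc, hconc.continuousOn_interior⟩
end

section
/- Let φ : ℝ² → ℝ be a function that is strictly concave along every straight line {(a + bw, w) : w ∈ I} contained in its convex domain, strictly decreasing in the second coordinate, and let v_ρ be concave and nondecreasing. Then w ↦ φ(v_ρ(w), w) is strictly quasiconcave on the domain of v_ρ. -/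
/-- The domain `𝒱 = {(v,w) : 0 < v ≤ w}`. -/
def Vset : Set (ℝ × ℝ) := {q | 0 < q.1 ∧ q.1 ≤ q.2}

set_option maxHeartbeats 2000000 in
theorem stmt17 (φ : ℝ × ℝ → ℝ)
    (hdec : ∀ v w w' : ℝ, (v, w) ∈ Vset → (v, w') ∈ Vset → w < w' → φ (v, w') < φ (v, w))
    (hline : ∀ a b : ℝ,
      StrictConcaveOn ℝ {w : ℝ | (a + b * w, w) ∈ Vset} (fun w => φ (a + b * w, w)))
    (D : Set ℝ) (hD : Convex ℝ D)
    (vρ : ℝ → ℝ) (hconc : ConcaveOn ℝ D vρ) (hmono : MonotoneOn vρ D)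
    (hgraph : ∀ w ∈ D, (vρ w, w) ∈ Vset) :
    ∀ w₁ ∈ D, ∀ w₂ ∈ D, ∀ w₃ ∈ D, w₁ < w₂ → w₂ < w₃ →
      min (φ (vρ w₁, w₁)) (φ (vρ w₃, w₃)) < φ (vρ w₂, w₂) := by
  intro w₁ h1 w₂ h2 w₃ h3 h12 h23
  have h13 : w₁ < w₃ := h12.trans h23
  have hg1 := hgraph w₁ h1
  have hg2 := hgraph w₂ h2
  have hg3 := hgraph w₃ h3
  obtain ⟨hg2a, hg2b⟩ := hg2
  -- μ with w₂ = μ w₁ + (1-μ) w₃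
  set μ : ℝ := (w₃ - w₂) / (w₃ - w₁) with hμdef
  have hμ0 : 0 < μ := div_pos (by linarith) (by linarith)
  have hμ1 : μ < 1 := by
    rw [hμdef, div_lt_one (by linarith)]; linarith
  have hw2 : w₂ = μ * w₁ + (1 - μ) * w₃ := by
    have : μ * (w₃ - w₁) = w₃ - w₂ := by
      rw [hμdef]; exact div_mul_cancel₀ _ (by linarith)
    nlinarith
  -- concavity of vρ at w₂
  have hcc : μ * vρ w₁ + (1 - μ) * vρ w₃ ≤ vρ w₂ := by
    have := hconc.2 h1 h3 hμ0.le (by linarith : (0:ℝ) ≤ 1 - μ) (by ring)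
    simpa [smul_eq_mul, ← hw2] using this
  have hv12 : vρ w₁ ≤ vρ w₂ := hmono h1 h2 h12.le
  have hv23 : vρ w₂ ≤ vρ w₃ := hmono h2 h3 h23.le
  by_cases hveq : vρ w₂ = vρ w₃
  · -- constant case: use strict decrease in w
    have hkey := hdec (vρ w₂) w₂ w₃ ⟨hg2a, hg2b⟩ ⟨hg2a, by linarith⟩ h23
    have : φ (vρ w₃, w₃) < φ (vρ w₂, w₂) := by rw [← hveq]; exact hkey
    calc min (φ (vρ w₁, w₁)) (φ (vρ w₃, w₃)) ≤ φ (vρ w₃, w₃) := min_le_right _ _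
      _ < φ (vρ w₂, w₂) := this
  · have hv23' : vρ w₂ < vρ w₃ := lt_of_le_of_ne hv23 hveq
    have hv13 : vρ w₁ < vρ w₃ := lt_of_le_of_lt hv12 hv23'
    set t : ℝ := (vρ w₃ - vρ w₂) / (vρ w₃ - vρ w₁) with htdef
    have ht0 : 0 < t := div_pos (by linarith) (by linarith)
    have htm : t * (vρ w₃ - vρ w₁) = vρ w₃ - vρ w₂ := by
      rw [htdef]; exact div_mul_cancel₀ _ (by linarith)
    have htμ : t ≤ μ := by nlinarith
    have ht1 : t < 1 := lt_of_le_of_lt htμ hμ1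
    set b : ℝ := (vρ w₃ - vρ w₁) / (w₃ - w₁) with hbdef
    set a : ℝ := vρ w₁ - b * w₁ with hadef
    have hbm : b * (w₃ - w₁) = vρ w₃ - vρ w₁ := by
      rw [hbdef]; exact div_mul_cancel₀ _ (by linarith)
    have ha1 : a + b * w₁ = vρ w₁ := by rw [hadef]; ring
    have ha3 : a + b * w₃ = vρ w₃ := by rw [hadef]; nlinarith
    set w₂' : ℝ := t * w₁ + (1 - t) * w₃ with hw2'def
    have hw2le : w₂ ≤ w₂' := by nlinarith
    have ha2 : a + b * w₂' = vρ w₂ := by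
      have : a + b * w₂' = t * (a + b * w₁) + (1 - t) * (a + b * w₃) := by
        rw [hw2'def]; ring
      rw [this, ha1, ha3]; nlinarith
    have hm1 : w₁ ∈ {w : ℝ | (a + b * w, w) ∈ Vset} := by
      show (a + b * w₁, w₁) ∈ Vset; rw [ha1]; exact hg1
    have hm3 : w₃ ∈ {w : ℝ | (a + b * w, w) ∈ Vset} := by
      show (a + b * w₃, w₃) ∈ Vset; rw [ha3]; exact hg3
    have hkey := (hline a b).2 hm1 hm3 (ne_of_lt h13) ht0
      (by linarith : (0:ℝ) < 1 - t) (by ring)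
    simp only [smul_eq_mul] at hkey
    have hrw : a + b * (t * w₁ + (1 - t) * w₃) = vρ w₂ := ha2
    rw [hrw, ha1, ha3, ← hw2'def] at hkey
    clear_value μ t b a w₂'
    have hmin1 : min (φ (vρ w₁, w₁)) (φ (vρ w₃, w₃)) ≤ φ (vρ w₁, w₁) := min_le_left _ _
    have hmin3 : min (φ (vρ w₁, w₁)) (φ (vρ w₃, w₃)) ≤ φ (vρ w₃, w₃) := min_le_right _ _
    have hstep : min (φ (vρ w₁, w₁)) (φ (vρ w₃, w₃)) < φ (vρ w₂, w₂') := by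
      have p1 := mul_le_mul_of_nonneg_left hmin1 ht0.le
      have p3 := mul_le_mul_of_nonneg_left hmin3 (by linarith : (0:ℝ) ≤ 1 - t)
      nlinarith [hkey, p1, p3]
    rcases eq_or_lt_of_le hw2le with heq | hlt
    · rw [← heq] at hstep; exact hstep
    · have := hdec (vρ w₂) w₂ w₂' ⟨hg2a, hg2b⟩ ⟨hg2a, by linarith⟩ hlt
      linarith
end
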